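/- Let O be a complete discrete valuation ring with maximal ideal m, residue field of size λ, and let k ≥ 1. Fix a unit D ∈ (O/m^k)^× with v(1-D) = 0. Then the number of matrices g ∈ GL_2(O/m^k) with det(g) = D and det(g - 1) = 0 equals λ^{2k-1}(λ+1). -/

import Mathlib

open scoped Classical

/-- The "reduced valuation" on `O ⧸ m ^ k`. -/
noncomputable def redVal {O : Type*} [CommRing O] (m : Ideal O) (k : ℕ)
    (a : O ⧸ m ^ k) : ℕ :=
  Nat.findGreatest (fun i => a ∈ (m ^ i).map (Ideal.Quotient.mk (m ^ k))) k

section Auxiliary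

open IsLocalRing

lemma aux_card_split {α : Type*} [Finite α] (p : α → Prop) :
    Nat.card α = Nat.card {x // p x} + Nat.card {x // ¬ p x} := by
  rw [← Nat.card_sum]
  exact Nat.card_congr (Equiv.sumCompl p).symm

lemma aux_card_V {R : Type*} [CommRing R] [IsLocalRing R] [Finite R] :
    Nat.card {x : R × R × R // x.2.1 * x.2.2 = x.1 * (1 - x.1)} =
      Nat.card R * (Nat.card R + Nat.card {y : R // ¬ IsUnit y}) := by
  set P : R × R × R → Prop := fun x => x.2.1 * x.2.2 = x.1 * (1 - x.1) with hP
  have hsplit : Nat.card {x : R × R × R // P x} =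
      Nat.card {x : R × R × R // P x ∧ IsUnit x.1} +
      Nat.card {x : R × R × R // P x ∧ ¬ IsUnit x.1} := by
    rw [aux_card_split (α := {x : R × R × R // P x}) (fun y => IsUnit y.1.1)]
    congr 1
    · exact Nat.card_congr (Equiv.subtypeSubtypeEquivSubtypeInter P (fun a => IsUnit a.1))
    · exact Nat.card_congr (Equiv.subtypeSubtypeEquivSubtypeInter P (fun a => ¬ IsUnit a.1))
  have e1 : {p : R × R // IsUnit (1 - p.1 * p.2)} ≃ {x : R × R × R // P x ∧ IsUnit x.1} := by
    refine Equiv.ofBijective (fun p =>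
      ⟨(1 - p.1.1 * p.1.2, (1 - p.1.1 * p.1.2) * p.1.1, p.1.2),
        by simp only [hP]; ring, p.2⟩) ⟨?_, ?_⟩
    · rintro ⟨⟨b, c⟩, hbc⟩ ⟨⟨b', c'⟩, hbc'⟩ h
      simp only [Subtype.mk.injEq, Prod.mk.injEq] at h
      obtain ⟨h1, h2, h3⟩ := h
      subst h3
      have hb : b = b' := by
        refine hbc.mul_left_cancel ?_
        rw [h2, h1]
      exact Subtype.ext (Prod.ext hb rfl)
    · rintro ⟨⟨a, b, c⟩, hbc, ha⟩
      simp only [hP] at hbc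
      have hx : (↑ha.unit⁻¹ : R) * a = 1 := ha.val_inv_mul
      have key : (↑ha.unit⁻¹ : R) * b * c = 1 - a := by
        linear_combination (↑ha.unit⁻¹ : R) * hbc + (1 - a) * hx
      refine ⟨⟨((↑ha.unit⁻¹ : R) * b, c), by rw [key, sub_sub_cancel]; exact ha⟩, ?_⟩
      apply Subtype.ext
      simp only [Prod.mk.injEq]
      refine ⟨by rw [key, sub_sub_cancel], ?_, trivial⟩
      rw [key, sub_sub_cancel]
      linear_combination b * hx
  have e2 : {p : R × R // ¬ IsUnit (p.1 * p.2)} ≃ {x : R × R × R // P x ∧ ¬ IsUnit x.1} := by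
    refine Equiv.ofBijective (fun p =>
      ⟨(p.1.1 * p.1.2, p.1.1, (1 - p.1.1 * p.1.2) * p.1.2),
        by simp only [hP]; ring, p.2⟩) ⟨?_, ?_⟩
    · rintro ⟨⟨b, c⟩, hbc⟩ ⟨⟨b', c'⟩, hbc'⟩ h
      simp only [Subtype.mk.injEq, Prod.mk.injEq] at h
      obtain ⟨h1, h2, h3⟩ := h
      subst h2
      have hu : IsUnit (1 - b * c) :=
        IsLocalRing.isUnit_one_sub_self_of_mem_nonunits _ (mem_nonunits_iff.mpr hbc)
      have hc : c = c' := by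
        refine hu.mul_left_cancel ?_
        rw [h3, ← h1]
      exact Subtype.ext (Prod.ext rfl hc)
    · rintro ⟨⟨a, b, c⟩, hbc, ha⟩
      simp only [hP] at hbc
      have hu : IsUnit (1 - a) :=
        IsLocalRing.isUnit_one_sub_self_of_mem_nonunits _ (mem_nonunits_iff.mpr ha)
      have hy : (↑hu.unit⁻¹ : R) * (1 - a) = 1 := hu.val_inv_mul
      have key : b * ((↑hu.unit⁻¹ : R) * c) = a := by
        linear_combination (↑hu.unit⁻¹ : R) * hbc + a * hy
      refine ⟨⟨(b, (↑hu.unit⁻¹ : R) * c), by rw [key]; exact ha⟩, ?_⟩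
      apply Subtype.ext
      simp only [Prod.mk.injEq]
      refine ⟨key, trivial, ?_⟩
      rw [key]
      linear_combination c * hy
  have e3 : {y : R // IsUnit y} × {y : R // ¬ IsUnit y} ≃
      {p : R × R // ¬ IsUnit (1 - p.1 * p.2)} := by
    refine Equiv.ofBijective (fun uz =>
      ⟨(uz.1.1, (↑uz.1.2.unit⁻¹ : R) * (1 - uz.2.1)), ?_⟩) ⟨?_, ?_⟩
    · obtain ⟨⟨u, hu⟩, ⟨z, hz⟩⟩ := uz
      have hx : (↑hu.unit⁻¹ : R) * u = 1 := hu.val_inv_mul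
      have : 1 - u * ((↑hu.unit⁻¹ : R) * (1 - z)) = z := by
        linear_combination (z - 1) * hx
      simpa only [this] using hz
    · rintro ⟨⟨u, hu⟩, ⟨z, hz⟩⟩ ⟨⟨u', hu'⟩, ⟨z', hz'⟩⟩ h
      simp only [Subtype.mk.injEq, Prod.mk.injEq] at h
      obtain ⟨h1, h2⟩ := h
      have hx : (↑hu.unit⁻¹ : R) * u = 1 := hu.val_inv_mul
      have hx' : (↑hu'.unit⁻¹ : R) * u' = 1 := hu'.val_inv_mul
      have hzz : z = z' := by
        linear_combination (-u) * h2 - ((↑hu'.unit⁻¹ : R) * (1 - z')) * h1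
          + (1 - z) * hx - (1 - z') * hx'
      subst h1; subst hzz
      rfl
    · rintro ⟨⟨b, c⟩, hm⟩
      have h1 : IsUnit (b * c) := by
        have := IsLocalRing.isUnit_one_sub_self_of_mem_nonunits _ (mem_nonunits_iff.mpr hm)
        rwa [sub_sub_cancel] at this
      have hb : IsUnit b := isUnit_of_mul_isUnit_left h1
      have hx : (↑hb.unit⁻¹ : R) * b = 1 := hb.val_inv_mul
      refine ⟨(⟨b, hb⟩, ⟨1 - b * c, hm⟩), ?_⟩
      apply Subtype.ext
      simp only [Prod.mk.injEq]
      refine ⟨trivial, ?_⟩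
      rw [sub_sub_cancel]
      linear_combination c * hx
  have e4 : {p : R × R // IsUnit (p.1 * p.2)} ≃ {y : R // IsUnit y} × {y : R // IsUnit y} :=
    (Equiv.subtypeEquivRight (fun p => (Commute.all p.1 p.2).isUnit_mul_iff)).trans
      Equiv.subtypeProdEquivProd
  have h0 : Nat.card R = Nat.card {y : R // IsUnit y} + Nat.card {y : R // ¬ IsUnit y} :=
    aux_card_split _
  have hA := aux_card_split (α := R × R) (fun p => IsUnit (1 - p.1 * p.2))
  rw [Nat.card_prod, ← Nat.card_congr e3, Nat.card_prod] at hA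
  have hB := aux_card_split (α := R × R) (fun p => IsUnit (p.1 * p.2))
  rw [Nat.card_prod, Nat.card_congr e4, Nat.card_prod] at hB
  rw [hsplit, ← Nat.card_congr e1, ← Nat.card_congr e2]
  zify at hA hB h0 ⊢
  linear_combination (-1 : ℤ) * hA - hB +
    ((Nat.card R : ℤ) + (Nat.card {y : R // IsUnit y} : ℤ)) * h0

lemma aux_card_S_eq {R : Type*} [CommRing R] (D : R) (hD : IsUnit (1 - D)) :
    Nat.card {g : Matrix (Fin 2) (Fin 2) R | g.det = D ∧ (g - 1).det = 0} =
    Nat.card {x : R × R × R // x.2.1 * x.2.2 = x.1 * (1 - x.1)} := by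
  have key : ∀ a b c : R, b * c = a * (1 - a) →
      (!![D + (1 - D) * a, (1 - D) ^ 2 * b; c, 1 - (1 - D) * a] :
        Matrix (Fin 2) (Fin 2) R).det = D ∧
      ((!![D + (1 - D) * a, (1 - D) ^ 2 * b; c, 1 - (1 - D) * a] :
        Matrix (Fin 2) (Fin 2) R) - 1).det = 0 := by
    intro a b c h
    constructor
    · rw [Matrix.det_fin_two_of]
      linear_combination (-(1 - D) ^ 2) * h
    · rw [Matrix.det_fin_two]
      simp only [Matrix.sub_apply, Matrix.one_apply, Matrix.cons_val', Matrix.cons_val_zero,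
        Matrix.cons_val_one, Matrix.head_cons, Matrix.head_fin_const, Matrix.empty_val',
        Matrix.cons_val_fin_one, Matrix.of_apply]
      norm_num
      linear_combination (-(1 - D) ^ 2) * h
  symm
  apply Nat.card_congr
  refine Equiv.ofBijective (fun x : {x : R × R × R // x.2.1 * x.2.2 = x.1 * (1 - x.1)} =>
    (⟨!![D + (1 - D) * x.1.1, (1 - D) ^ 2 * x.1.2.1; x.1.2.2, 1 - (1 - D) * x.1.1],
      key x.1.1 x.1.2.1 x.1.2.2 x.2⟩ :
      {g : Matrix (Fin 2) (Fin 2) R | g.det = D ∧ (g - 1).det = 0})) ⟨?_, ?_⟩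
  · rintro ⟨⟨a, b, c⟩, h⟩ ⟨⟨a', b', c'⟩, h'⟩ hxy
    have hM := congrArg Subtype.val hxy
    simp only at hM
    have h00 := congrFun (congrFun hM 0) 0
    have h01 := congrFun (congrFun hM 0) 1
    have h10 := congrFun (congrFun hM 1) 0
    simp only [Matrix.cons_val', Matrix.cons_val_zero, Matrix.cons_val_one, Matrix.head_cons,
      Matrix.empty_val', Matrix.cons_val_fin_one, Matrix.of_apply] at h00 h01 h10
    have ha : a = a' := hD.mul_left_cancel (by linear_combination h00)
    have hb : b = b' := (hD.pow 2).mul_left_cancel (by linear_combination h01)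
    apply Subtype.ext
    simp only [Prod.mk.injEq]
    exact ⟨ha, hb, h10⟩
  · rintro ⟨g, hg1, hg2⟩
    have hx : (↑hD.unit⁻¹ : R) * (1 - D) = 1 := hD.val_inv_mul
    have h1 : g 0 0 * g 1 1 - g 0 1 * g 1 0 = D := by
      rw [← Matrix.det_fin_two]; exact hg1
    have h2 : (g 0 0 - 1) * (g 1 1 - 1) - g 0 1 * g 1 0 = 0 := by
      rw [Matrix.det_fin_two] at hg2
      simpa only [Matrix.sub_apply, Matrix.one_apply, if_pos rfl, ↓reduceIte, Fin.isValue,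
        Matrix.one_apply_ne (by decide : (0 : Fin 2) ≠ 1),
        Matrix.one_apply_ne (by decide : (1 : Fin 2) ≠ 0), sub_zero, Matrix.one_apply_eq]
        using hg2
    have h3 : g 0 1 * g 1 0 = (g 0 0 - D) * (1 - g 0 0) := by
      linear_combination (g 0 0 - 1) * h1 - g 0 0 * h2
    have h4 : g 0 0 + g 1 1 = D + 1 := by linear_combination h1 - h2
    refine ⟨⟨((↑hD.unit⁻¹ : R) * (g 0 0 - D), (↑hD.unit⁻¹ : R) ^ 2 * g 0 1, g 1 0), ?_⟩, ?_⟩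
    · show (↑hD.unit⁻¹ : R) ^ 2 * g 0 1 * g 1 0 = _
      linear_combination (↑hD.unit⁻¹ : R) ^ 2 * h3 + (↑hD.unit⁻¹ : R) * (g 0 0 - D) * hx
    · apply Subtype.ext
      show !![_, _; _, _] = g
      apply Matrix.ext
      intro i j
      fin_cases i <;> fin_cases j <;>
        simp only [Matrix.cons_val', Matrix.cons_val_zero, Matrix.cons_val_one, Matrix.head_cons,
          Matrix.empty_val', Matrix.cons_val_fin_one, Matrix.of_apply, Fin.zero_eta, Fin.mk_one,
          Fin.isValue, Matrix.vecHead, Matrix.vecTail]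
      · linear_combination (g 0 0 - D) * hx
      · linear_combination (g 0 1) * ((1 - D) * (↑hD.unit⁻¹ : R) + 1) * hx
      · linear_combination (-1 : R) * h4 + (D - g 0 0) * hx

variable {O : Type*} [CommRing O] [IsDomain O] [IsDiscreteValuationRing O]

lemma aux_quot_card_pow (j : ℕ) :
    Nat.card (O ⧸ (maximalIdeal O) ^ j) = Nat.card (O ⧸ maximalIdeal O) ^ j := by
  have h := cardQuot_pow_of_prime (P := maximalIdeal O)
    (IsDiscreteValuationRing.not_a_field O) (i := j)
  simpa [Submodule.cardQuot_apply] using h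

lemma aux_isUnit_mk_iff {k : ℕ} (hk : k ≠ 0) (a : O) :
    IsUnit (Ideal.Quotient.mk ((maximalIdeal O) ^ k) a) ↔ a ∉ maximalIdeal O := by
  constructor
  · intro h ha
    obtain ⟨b, hb⟩ := Ideal.Quotient.mk_surjective (↑h.unit⁻¹ : O ⧸ (maximalIdeal O) ^ k)
    have h1 : Ideal.Quotient.mk ((maximalIdeal O) ^ k) (a * b) = 1 := by
      rw [map_mul, hb, IsUnit.mul_val_inv]
    have h2 : a * b - 1 ∈ (maximalIdeal O) ^ k := by
      rw [← Ideal.Quotient.eq_zero_iff_mem, map_sub, h1, map_one, sub_self]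
    have h3 : a * b - 1 ∈ maximalIdeal O := Ideal.pow_le_self hk h2
    have h4 : (1 : O) ∈ maximalIdeal O := by
      have := Ideal.sub_mem _ (Ideal.mul_mem_right b _ ha) h3
      simpa using this
    exact (IsLocalRing.maximalIdeal.isMaximal O).ne_top ((Ideal.eq_top_iff_one _).mpr h4)
  · intro ha
    have : IsUnit a := by
      by_contra h
      exact ha (IsLocalRing.mem_maximalIdeal a |>.mpr (mem_nonunits_iff.mpr h))
    exact this.map _

lemma aux_card_nonunits {k : ℕ} (hk : 1 ≤ k) :
    Nat.card {x : O ⧸ (maximalIdeal O) ^ k // ¬ IsUnit x}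
      = Nat.card (O ⧸ maximalIdeal O) ^ (k - 1) := by
  obtain ⟨j, rfl⟩ : ∃ j, k = j + 1 := ⟨k - 1, (Nat.succ_pred_eq_of_pos hk).symm⟩
  simp only [Nat.add_sub_cancel]
  obtain ⟨ϖ, hϖ⟩ := IsDiscreteValuationRing.exists_irreducible O
  have hϖmem : ϖ ∈ maximalIdeal O := by
    rw [hϖ.maximalIdeal_eq]; exact Ideal.mem_span_singleton_self ϖ
  let φ : O →ₗ[O] O ⧸ (maximalIdeal O) ^ (j + 1) :=
    ((maximalIdeal O) ^ (j + 1)).mkQ.comp (LinearMap.mulLeft O ϖ)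
  have hφ : ∀ x : O, φ x = Ideal.Quotient.mk ((maximalIdeal O) ^ (j + 1)) (ϖ * x) := fun _ => rfl
  have hker : ∀ x : O, φ x = 0 ↔ x ∈ (maximalIdeal O) ^ j := by
    intro x
    rw [hφ, Ideal.Quotient.eq_zero_iff_mem, hϖ.maximalIdeal_eq, Ideal.span_singleton_pow,
      Ideal.span_singleton_pow, Ideal.mem_span_singleton, Ideal.mem_span_singleton,
      pow_succ']
    exact mul_dvd_mul_iff_left hϖ.ne_zero
  have hle : (maximalIdeal O) ^ j ≤ LinearMap.ker φ := fun x hx => (hker x).mpr hx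
  let f : (O ⧸ (maximalIdeal O) ^ j) →ₗ[O] O ⧸ (maximalIdeal O) ^ (j + 1) :=
    ((maximalIdeal O) ^ j).liftQ φ hle
  have hf : ∀ x : O, f (Ideal.Quotient.mk ((maximalIdeal O) ^ j) x)
      = Ideal.Quotient.mk ((maximalIdeal O) ^ (j + 1)) (ϖ * x) := fun _ => rfl
  have hinj : Function.Injective f := by
    rw [← LinearMap.ker_eq_bot, Submodule.ker_liftQ_eq_bot]
    exact fun x hx => (hker x).mp hx
  have hrange : ∀ y : O ⧸ (maximalIdeal O) ^ (j + 1), (∃ x, f x = y) ↔ ¬ IsUnit y := by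
    intro y
    obtain ⟨a, rfl⟩ := Ideal.Quotient.mk_surjective y
    constructor
    · rintro ⟨x, hx⟩ hy
      obtain ⟨x', rfl⟩ := Ideal.Quotient.mk_surjective x
      rw [hf] at hx
      rw [← hx, aux_isUnit_mk_iff (by omega)] at hy
      exact hy (Ideal.mul_mem_right x' _ hϖmem)
    · intro hy
      have ha : a ∈ maximalIdeal O := by
        by_contra hc; exact hy ((aux_isUnit_mk_iff (by omega) a).mpr hc)
      rw [hϖ.maximalIdeal_eq, Ideal.mem_span_singleton] at ha
      obtain ⟨c, rfl⟩ := ha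
      exact ⟨Ideal.Quotient.mk _ c, hf c⟩
  have e : (O ⧸ (maximalIdeal O) ^ j) ≃ {x : O ⧸ (maximalIdeal O) ^ (j + 1) // ¬ IsUnit x} := by
    refine Equiv.ofBijective (fun x => ⟨f x, (hrange (f x)).mp ⟨x, rfl⟩⟩) ⟨?_, ?_⟩
    · intro x y h
      exact hinj (congrArg Subtype.val h)
    · rintro ⟨y, hy⟩
      obtain ⟨x, hx⟩ := (hrange y).mpr hy
      exact ⟨x, Subtype.ext hx⟩
  rw [← Nat.card_congr e, aux_quot_card_pow]

end Auxiliary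

theorem stmt_2 {O : Type*} [CommRing O] [IsDomain O] [IsDiscreteValuationRing O]
    [IsAdicComplete (IsLocalRing.maximalIdeal O) O]
    (lam : ℕ) (hlam : Nat.card (O ⧸ IsLocalRing.maximalIdeal O) = lam)
    (k : ℕ) (hk : 1 ≤ k)
    (D : O ⧸ (IsLocalRing.maximalIdeal O) ^ k) (hD : IsUnit D)
    (hD1 : redVal (IsLocalRing.maximalIdeal O) k (1 - D) = 0) :
    Nat.card {g : Matrix (Fin 2) (Fin 2) (O ⧸ (IsLocalRing.maximalIdeal O) ^ k) |
        g.det = D ∧ (g - 1).det = 0} = lam ^ (2 * k - 1) * (lam + 1) := by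
  have hMtop : (IsLocalRing.maximalIdeal O) ^ k ≠ ⊤ := by
    intro h
    exact (IsLocalRing.maximalIdeal.isMaximal O).ne_top
      (top_le_iff.mp (h ▸ Ideal.pow_le_self (by omega)))
  have hunit : IsUnit (1 - D) := by
    obtain ⟨a, ha⟩ := Ideal.Quotient.mk_surjective (I := (IsLocalRing.maximalIdeal O) ^ k) (1 - D)
    rw [← ha, aux_isUnit_mk_iff (by omega)]
    intro hmem
    have h0 : (1 - D) ∈ ((IsLocalRing.maximalIdeal O) ^ 1).map
        (Ideal.Quotient.mk ((IsLocalRing.maximalIdeal O) ^ k)) := by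
      rw [pow_one]
      exact ha ▸ Ideal.mem_map_of_mem _ hmem
    unfold redVal at hD1
    exact Nat.findGreatest_eq_zero_iff.mp hD1 one_pos hk h0
  rcases finite_or_infinite (O ⧸ IsLocalRing.maximalIdeal O) with hfin | hinf
  · have hlam0 : lam ≠ 0 := by
      rw [← hlam]
      exact Nat.card_pos.ne'
    haveI : Finite (O ⧸ (IsLocalRing.maximalIdeal O) ^ k) := by
      refine Nat.finite_of_card_ne_zero ?_
      rw [aux_quot_card_pow, hlam]
      exact pow_ne_zero _ hlam0
    haveI : Nontrivial (O ⧸ (IsLocalRing.maximalIdeal O) ^ k) :=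
      Ideal.Quotient.nontrivial_iff.mpr hMtop
    haveI : IsLocalRing (O ⧸ (IsLocalRing.maximalIdeal O) ^ k) :=
      IsLocalRing.of_surjective' (Ideal.Quotient.mk _) Ideal.Quotient.mk_surjective
    rw [aux_card_S_eq D hunit, aux_card_V, aux_quot_card_pow, aux_card_nonunits hk, hlam]
    obtain ⟨j, rfl⟩ : ∃ j, k = j + 1 := ⟨k - 1, by omega⟩
    have h2 : 2 * (j + 1) - 1 = 2 * j + 1 := by omega
    rw [h2]
    simp only [Nat.add_sub_cancel]
    ring
  · haveI : Infinite (O ⧸ (IsLocalRing.maximalIdeal O) ^ k) := by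
      refine Infinite.of_surjective
        (Ideal.Quotient.factor (Ideal.pow_le_self (by omega))) ?_
      intro y
      obtain ⟨a, rfl⟩ := Ideal.Quotient.mk_surjective y
      exact ⟨Ideal.Quotient.mk _ a, Ideal.Quotient.factor_mk _ a⟩
    have hmem : ∀ b : O ⧸ (IsLocalRing.maximalIdeal O) ^ k,
        (!![1, b; 0, D] : Matrix (Fin 2) (Fin 2) _).det = D ∧
        ((!![1, b; 0, D] : Matrix (Fin 2) (Fin 2) _) - 1).det = 0 := by
      intro b
      constructor
      · rw [Matrix.det_fin_two_of]; ring
      · rw [Matrix.det_fin_two]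
        simp [Matrix.sub_apply, Matrix.one_apply]
    haveI : Infinite ↥{g : Matrix (Fin 2) (Fin 2) (O ⧸ (IsLocalRing.maximalIdeal O) ^ k) |
        g.det = D ∧ (g - 1).det = 0} := by
      refine Infinite.of_injective (fun b => ⟨!![1, b; 0, D], hmem b⟩) ?_
      intro b b' h
      have := congrArg (fun s => s.val 0 1) h
      simpa using this
    rw [Nat.card_eq_zero_of_infinite]
    have hl : lam = 0 := by rw [← hlam]; exact Nat.card_eq_zero_of_infinite
    rw [hl, Nat.zero_pow (by omega), zero_mul]
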